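/- (Lemma: full EURC correctness) Let G be an undirected graph with positive edge costs, root r, revenues ρ ≥ 0, budget B, hop limit H, and let uv ∈ E(G) with u,v ≠ r. Suppose there exist (r,u)- and (r,v)-paths P_{r,u}, P_{r,v} in G with c(P_{r,v}) ≤ c_{uv}, |E(P_{r,v})| ≤ len(r,u)+1, c(P_{r,u}) ≤ c_{uv}, and |E(P_{r,u})| ≤ len(r,v)+1. Then for every feasible STPRBH solution T in G there exists a feasible STPRBH solution T' in G \ uv with ∑_{w∈V(T')} ρ_w ≥ ∑_{w∈V(T)} ρ_w. In particular, the optimal value of STPRBH on G \ uv equals that on G. -/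

import Mathlib

/-- A feasible STPRBH solution: a subtree of `G` containing the root `r`
whose nodes all have depth at most `H` and whose total edge cost is at
most `B`. -/
def STPRBHFeasible {V : Type*} [Fintype V] (G : SimpleGraph V)
    (c : Sym2 V → ℝ) (r : V) (B : ℝ) (H : ℕ) (T : G.Subgraph) : Prop :=
  T.coe.IsTree ∧ r ∈ T.verts ∧
  (∀ (hr : r ∈ T.verts) (w : T.verts), T.coe.dist ⟨r, hr⟩ w ≤ H) ∧
  ∑ e ∈ T.edgeSet.toFinite.toFinset, c e ≤ B

/-- Total revenue of a subgraph. -/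
noncomputable def STPRBHRevenue {V : Type*} [Fintype V] {G : SimpleGraph V}
    (ρ : V → ℝ) (T : G.Subgraph) : ℝ :=
  ∑ w ∈ T.verts.toFinite.toFinset, ρ w


open SimpleGraph

namespace STPRBHAux

variable {W : Type*}

/-- There is a shortest walk from `r` to any `z` avoiding a suitable edge `s(x,y)`. -/
lemma exists_shortest_avoiding (U : SimpleGraph W) (hU : U.Connected) (r x y : W)
    (hxy : U.Adj x y)
    (hcond : U.dist r x = U.dist r y ∨
      (U.dist r x + 1 = U.dist r y ∧
        ∃ b, b ≠ x ∧ U.Adj b y ∧ U.dist r b + 1 = U.dist r y)) :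
    ∀ (n : ℕ) (z : W), U.dist r z ≤ n →
      ∃ p : U.Walk r z, p.length = U.dist r z ∧ s(x, y) ∉ p.edges := by
  intro n
  induction n with
  | zero =>
    intro z hz
    have hz0 : U.dist r z = 0 := Nat.le_zero.mp hz
    have : r = z := ((hU.preconnected r z).dist_eq_zero_iff).mp hz0
    subst this
    exact ⟨Walk.nil, by simpa using hz0.symm, by simp⟩
  | succ n ih =>
    intro z hz
    by_cases hle : U.dist r z ≤ n
    · exact ih z hle
    have hdz : U.dist r z = n + 1 := le_antisymm hz (by omega)
    obtain ⟨q, hq⟩ := (hU.preconnected r z).exists_walk_length_eq_dist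
    rw [hdz] at hq
    -- peel the last edge of q
    cases q with
    | nil => simp at hq
    | cons h p =>
      obtain ⟨y', p', hadj, hcq⟩ := Walk.exists_cons_eq_concat h p
      have hlen : p'.length + 1 = n + 1 := by
        have := congrArg Walk.length hcq
        simpa [Walk.length_concat] using this.symm.trans hq
    -- y' is a penultimate vertex: dist r y' = n
      have hdy' : U.dist r y' = n := by
        have h1 : U.dist r y' ≤ n := by
          have := U.dist_le p'
          omega
        have h2 : U.dist r z ≤ U.dist r y' + 1 := by
          have := hU.dist_triangle (u := r) (v := y') (w := z)
          have h3 : U.dist y' z ≤ 1 := by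
            simpa using U.dist_le hadj.toWalk
          omega
        omega
      by_cases he : s(y', z) = s(x, y)
      · -- the last edge is the forbidden edge
        rw [Sym2.eq_iff] at he
        rcases he with ⟨rfl, rfl⟩ | ⟨rfl, rfl⟩
        · -- y' = x, z = y : need alternate parent
          rcases hcond with h1 | ⟨h2, b, hbx, hby, hdb⟩
          · omega
          · have hdb' : U.dist r b = n := by omega
            obtain ⟨pb, hpb, hpbe⟩ := ih b (by omega)
            refine ⟨pb.concat hby, ?_, ?_⟩
            · rw [Walk.length_concat, hpb, hdb', hdz]
            · rw [Walk.edges_concat, List.concat_eq_append, List.mem_append]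
              rintro (hmem | hmem)
              · exact hpbe hmem
              · simp only [List.mem_singleton, Sym2.eq_iff] at hmem
                rcases hmem with ⟨rfl, _⟩ | ⟨rfl, rfl⟩
                · exact hbx rfl
                · exact U.loopless.irrefl _ hxy
        · -- y' = y, z = x : impossible
          rcases hcond with h1 | ⟨h2, _⟩ <;> omega
      · obtain ⟨p1, hp1, hp1e⟩ := ih y' (by omega)
        refine ⟨p1.concat hadj, ?_, ?_⟩
        · rw [Walk.length_concat, hp1, hdy', hdz]
        · rw [Walk.edges_concat, List.concat_eq_append, List.mem_append]
          rintro (hmem | hmem)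
          · exact hp1e hmem
          · simp only [List.mem_singleton] at hmem
            exact he hmem.symm

end STPRBHAux


open SimpleGraph

namespace STPRBHAux2

variable {W : Type*}

lemma exists_deletable (U : SimpleGraph W) (hU : U.Connected) (r : W)
    (hnac : ¬ U.IsAcyclic) :
    ∃ e ∈ U.edgeSet, ∀ z, ∃ p : U.Walk r z, p.length = U.dist r z ∧ e ∉ p.edges := by
  classical
  rw [IsAcyclic] at hnac
  push_neg at hnac
  obtain ⟨x0, cyc, hcyc⟩ := hnac
  -- pick a vertex of the cycle of maximal distance from r
  obtain ⟨w, hwmem, hwmax⟩ := Finset.exists_max_image cyc.support.toFinset (U.dist r)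
    ⟨x0, by simp [Walk.start_mem_support]⟩
  rw [List.mem_toFinset] at hwmem
  have hwmax' : ∀ z ∈ cyc.support, U.dist r z ≤ U.dist r w := fun z hz =>
    hwmax z (List.mem_toFinset.mpr hz)
  set c' := cyc.rotate w hwmem with hc'
  have hc'cyc : c'.IsCycle := hcyc.rotate hwmem
  have hedgesperm : List.Perm c'.edges cyc.edges := (cyc.rotate_edges w hwmem).perm
  -- peel the first edge
  cases hc : c' with
  | nil => rw [hc] at hc'cyc; exact absurd rfl hc'cyc.ne_nil
  | cons hws q =>
    rename_i s
    -- peel the last edge of q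
    have hqlen : 2 ≤ q.length := by
      have := hc'cyc.three_le_length
      rw [hc] at this
      simpa using this
    obtain ⟨t, q2, htw, hq2⟩ : ∃ (t : W) (q2 : U.Walk s t) (htw : U.Adj t w),
        q = q2.concat htw := by
      cases hq : q with
      | nil => rw [hq] at hqlen; simp at hqlen
      | cons h p =>
        obtain ⟨t, q2, htw, hcq⟩ := Walk.exists_cons_eq_concat h p
        exact ⟨t, q2, htw, hcq⟩
    have hmem_ws : s(w, s) ∈ cyc.edges := hedgesperm.mem_iff.mp (by rw [hc]; simp)
    have hmem_tw : s(t, w) ∈ cyc.edges := by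
      refine hedgesperm.mem_iff.mp ?_
      rw [hc, Walk.edges_cons, hq2, Walk.edges_concat]
      simp
    have hsupp_s : s ∈ cyc.support := Walk.snd_mem_support_of_mem_edges cyc hmem_ws
    have hsupp_t : t ∈ cyc.support := Walk.fst_mem_support_of_mem_edges cyc hmem_tw
    have hst : s ≠ t := by
      rintro rfl
      have hnodup := hc'cyc.edges_nodup
      rw [hc, Walk.edges_cons, hq2, Walk.edges_concat] at hnodup
      rw [List.nodup_cons] at hnodup
      exact hnodup.1 (by rw [Sym2.eq_swap]; simp)
    have hds : U.dist r s ≤ U.dist r w := hwmax' s hsupp_s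
    have hdt : U.dist r t ≤ U.dist r w := hwmax' t hsupp_t
    have hbs : U.dist r w ≤ U.dist r s + 1 := by
      have h1 := hU.dist_triangle (u := r) (v := s) (w := w)
      have h2 : U.dist s w ≤ 1 := by simpa using U.dist_le hws.symm.toWalk
      omega
    have hbt : U.dist r w ≤ U.dist r t + 1 := by
      have h1 := hU.dist_triangle (u := r) (v := t) (w := w)
      have h2 : U.dist t w ≤ 1 := by simpa using U.dist_le htw.toWalk
      omega
    by_cases h1 : U.dist r s = U.dist r w
    · refine ⟨s(w, s), hws, fun z => ?_⟩
      obtain ⟨p, hp1, hp2⟩ := STPRBHAux.exists_shortest_avoiding U hU r w s hws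
        (Or.inl h1.symm) (U.dist r z) z le_rfl
      exact ⟨p, hp1, hp2⟩
    by_cases h2 : U.dist r t = U.dist r w
    · refine ⟨s(w, t), htw.symm, fun z => ?_⟩
      obtain ⟨p, hp1, hp2⟩ := STPRBHAux.exists_shortest_avoiding U hU r w t htw.symm
        (Or.inl h2.symm) (U.dist r z) z le_rfl
      exact ⟨p, hp1, hp2⟩
    · refine ⟨s(s, w), hws.symm, fun z => ?_⟩
      obtain ⟨p, hp1, hp2⟩ := STPRBHAux.exists_shortest_avoiding U hU r s w hws.symm
        (Or.inr ⟨by omega, t, hst.symm, htw, by omega⟩) (U.dist r z) z le_rfl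
      exact ⟨p, hp1, hp2⟩

/-- Every connected graph on a finite vertex type has a spanning tree that does not
increase distances from `r`. -/
lemma exists_dist_tree [Finite W] (U : SimpleGraph W) (r : W) (hU : U.Connected) :
    ∃ T : SimpleGraph W, T ≤ U ∧ T.IsTree ∧ ∀ w, T.dist r w ≤ U.dist r w := by
  classical
  obtain ⟨n, hn⟩ : ∃ n, U.edgeSet.ncard ≤ n := ⟨U.edgeSet.ncard, le_rfl⟩
  induction n generalizing U with
  | zero =>
    by_cases hac : U.IsAcyclic
    · exact ⟨U, le_rfl, ⟨hU, hac⟩, fun w => le_rfl⟩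
    · obtain ⟨e, he, -⟩ := exists_deletable U hU r hac
      exfalso
      have : U.edgeSet = ∅ := (Set.ncard_eq_zero U.edgeSet.toFinite).mp (Nat.le_zero.mp hn)
      simp [this] at he
  | succ n ih =>
    by_cases hac : U.IsAcyclic
    · exact ⟨U, le_rfl, ⟨hU, hac⟩, fun w => le_rfl⟩
    obtain ⟨e, he, havoid⟩ := exists_deletable U hU r hac
    set U' := U.deleteEdges {e} with hU'
    have hwalk : ∀ z, ∃ p' : U'.Walk r z, p'.length = U.dist r z := by
      intro z
      obtain ⟨p, hp1, hp2⟩ := havoid z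
      refine ⟨p.toDeleteEdges {e} (fun e' he' hee' => hp2 (by rwa [Set.mem_singleton_iff.mp hee'] at he')), ?_⟩
      rw [Walk.length_transfer, hp1]
    have hU'conn : U'.Connected := by
      haveI : Nonempty W := ⟨r⟩
      have hreach : ∀ z, U'.Reachable r z := fun z => ⟨(hwalk z).choose⟩
      exact Connected.mk (fun a b => (hreach a).symm.trans (hreach b))
    have hU'dist : ∀ z, U'.dist r z ≤ U.dist r z := by
      intro z
      obtain ⟨p', hp'⟩ := hwalk z
      simpa [hp'] using U'.dist_le p'
    have hcard : U'.edgeSet.ncard ≤ n := by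
      have hss : U'.edgeSet ⊂ U.edgeSet := by
        rw [hU', edgeSet_deleteEdges]
        exact ⟨Set.diff_subset, fun hsub => (hsub he).2 rfl⟩
      have := Set.ncard_lt_ncard hss (U.edgeSet.toFinite)
      omega
    obtain ⟨T, hTle, hTtree, hTdist⟩ := ih U' hU'conn hcard
    exact ⟨T, hTle.trans (deleteEdges_le _), hTtree,
      fun w => (hTdist w).trans (hU'dist w)⟩

end STPRBHAux2


open SimpleGraph

namespace STPRBHAux3

variable {W : Type*}

/-- In a tree, distances from a root along an edge differ by exactly one. -/
lemma tree_adj_dist {G : SimpleGraph W} (hG : G.IsTree) {r a b : W} (hab : G.Adj a b)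
    (h : G.dist r a ≤ G.dist r b) : G.dist r b = G.dist r a + 1 := by
  classical
  obtain ⟨p, hp⟩ := (hG.isConnected.preconnected r a).exists_walk_length_eq_dist
  have hppath : p.IsPath := p.isPath_of_length_eq_dist hp
  by_cases hb : b ∈ p.support
  · exfalso
    have hq := p.take_spec hb
    have hlen : (p.takeUntil b hb).length + (p.dropUntil b hb).length = p.length := by
      conv_rhs => rw [← hq]
      rw [Walk.length_append]
    have hd1 : G.dist r b ≤ (p.takeUntil b hb).length := G.dist_le _
    have hd2 : 1 ≤ (p.dropUntil b hb).length := by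
      by_contra hcon
      push_neg at hcon
      have : (p.dropUntil b hb).length = 0 := by omega
      exact hab.ne' (Walk.eq_of_length_eq_zero this)
    omega
  · have hq : (p.concat hab).IsPath := by
      rw [← Walk.isPath_reverse_iff, Walk.reverse_concat]
      rw [Walk.cons_isPath_iff]
      exact ⟨hppath.reverse, by simpa using hb⟩
    obtain ⟨p2, hp2⟩ := (hG.isConnected.preconnected r b).exists_walk_length_eq_dist
    have hp2path : p2.IsPath := p2.isPath_of_length_eq_dist hp2
    have := hG.IsAcyclic.path_unique ⟨p.concat hab, hq⟩ ⟨p2, hp2path⟩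
    have hlen : (p.concat hab).length = p2.length := congrArg (fun q : G.Path r b => (q : G.Walk r b).length) this
    rw [Walk.length_concat, hp] at hlen
    omega

/-- A walk of `G` whose edges lie in a subgraph `S` and whose endpoints are vertices of `S`
lifts to a walk in `S.coe` of the same length. -/
lemma walk_to_coe {V : Type*} {G : SimpleGraph V} (S : G.Subgraph) :
    ∀ {a b : V} (p : G.Walk a b), (∀ e ∈ p.edges, e ∈ S.edgeSet) →
      ∀ (ha : a ∈ S.verts) (hb : b ∈ S.verts),
      ∃ q : S.coe.Walk ⟨a, ha⟩ ⟨b, hb⟩, q.length = p.length := by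
  intro a b p
  induction p with
  | nil => exact fun _ _ _ => ⟨Walk.nil, rfl⟩
  | @cons x y z h p ih =>
    intro hedges ha hb
    have hSxy : S.Adj x y := by
      rw [← Subgraph.mem_edgeSet]
      exact hedges _ (by simp)
    have hy : y ∈ S.verts := S.edge_vert hSxy.symm
    obtain ⟨q, hq⟩ := ih (fun e he => hedges e (by simp [he])) hy hb
    exact ⟨Walk.cons (by exact hSxy : S.coe.Adj ⟨x, ha⟩ ⟨y, hy⟩) q, by exact congrArg Nat.succ hq⟩

end STPRBHAux3

section LiftSub

variable {V : Type*}

/-- Transfer a subgraph of `G` to a subgraph of `G'` when its adjacency relation is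
supported on `G'`. -/
def liftSub {G G' : SimpleGraph V} (T : G.Subgraph)
    (h : ∀ ⦃a b : V⦄, T.Adj a b → G'.Adj a b) : G'.Subgraph where
  verts := T.verts
  Adj := T.Adj
  adj_sub := fun hab => h hab
  edge_vert := fun hab => T.edge_vert hab
  symm := T.symm

lemma liftSub_coe {G G' : SimpleGraph V} (T : G.Subgraph)
    (h : ∀ ⦃a b : V⦄, T.Adj a b → G'.Adj a b) : (liftSub T h).coe = T.coe := rfl

end LiftSub

namespace STPRBHAux4

lemma key {V : Type*} [Fintype V] (G : SimpleGraph V)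
    (c : Sym2 V → ℝ) (hc : ∀ e ∈ G.edgeSet, 0 < c e)
    (ρ : V → ℝ) (hρ : ∀ v, 0 ≤ ρ v) (r : V) (B : ℝ) (H : ℕ)
    (u v : V) (hur : u ≠ r) (hvr : v ≠ r) (huv : G.Adj u v)
    (P : G.Walk r v) (hP : P.IsPath)
    (hcP : (P.edges.map c).sum ≤ c s(u, v))
    (hlP : P.length ≤ G.dist r u + 1)
    (T : G.Subgraph) (hT : STPRBHFeasible G c r B H T) (he : T.Adj u v)
    (hd : T.coe.dist ⟨r, hT.2.1⟩ ⟨u, T.edge_vert he⟩ ≤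
          T.coe.dist ⟨r, hT.2.1⟩ ⟨v, T.edge_vert he.symm⟩) :
    ∃ T' : (G.deleteEdges {s(u, v)}).Subgraph,
      STPRBHFeasible (G.deleteEdges {s(u, v)}) c r B H T' ∧
      STPRBHRevenue ρ T ≤ STPRBHRevenue ρ T' := by
  classical
  obtain ⟨hTtree, hr, hH, hcost⟩ := hT
  set rh : T.verts := ⟨r, hr⟩ with hrh
  set uh : T.verts := ⟨u, T.edge_vert he⟩ with huh
  set vh : T.verts := ⟨v, T.edge_vert he.symm⟩ with hvh
  have hTconn : T.coe.Connected := hTtree.isConnected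
  have hadjuv : T.coe.Adj uh vh := he
  have hdv : T.coe.dist rh vh = T.coe.dist rh uh + 1 :=
    STPRBHAux3.tree_adj_dist hTtree hadjuv hd
  -- G-distance from r to u is at most the tree depth of u
  have hGdu : G.dist r u ≤ T.coe.dist rh uh := by
    obtain ⟨p, hp⟩ := (hTconn.preconnected rh uh).exists_walk_length_eq_dist
    have := G.dist_le (p.map T.hom)
    rw [Walk.length_map, hp] at this
    exact this
  have hdvH : T.coe.dist rh vh ≤ H := hH hr vh
  have hPH : P.length ≤ H := by
    have := hdvH
    omega
  -- the union subgraph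
  set U : G.Subgraph := T.deleteEdges {s(u, v)} ⊔ P.toSubgraph with hU
  have hrU : r ∈ U.verts := by
    rw [hU]
    exact Or.inl hr
  have hTsubU : T.verts ⊆ U.verts := fun x hx => by
    rw [hU]; exact Or.inl hx
  -- the replacement path avoids the deleted edge
  have huvP : s(u, v) ∉ P.edges := by
    intro hmem
    have hlen2 : 2 ≤ P.length := by
      cases P with
      | nil => exact absurd rfl hvr
      | cons h p =>
        cases p with
        | nil =>
          rw [Walk.edges_cons, Walk.edges_nil, List.mem_singleton, Sym2.eq_iff] at hmem
          rcases hmem with ⟨h1, -⟩ | ⟨-, h2⟩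
          · exact (hur h1).elim
          · exact (hvr h2).elim
        | cons h' p' =>
          simp only [Walk.length_cons]
          omega
    obtain ⟨l1, l2, hsplit⟩ := List.append_of_mem hmem
    have hpos : ∀ e ∈ P.edges, 0 < c e := fun e hmem' =>
      hc e (P.edges_subset_edgeSet hmem')
    have hll : l1.length + l2.length + 1 = P.edges.length := by
      rw [hsplit]; simp; omega
    have hPlenE : P.edges.length = P.length := P.length_edges
    have hl12 : l1 ≠ [] ∨ l2 ≠ [] := by
      rcases l1 with _ | ⟨a, l1'⟩
      · right
        intro hnil
        rw [hnil] at hll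
        simp at hll
        omega
      · left; simp
    have hsum : (P.edges.map c).sum = c s(u, v) + ((l1 ++ l2).map c).sum := by
      rw [hsplit]
      simp [List.sum_append]
      ring
    have hrest : 0 < ((l1 ++ l2).map c).sum := by
      apply List.sum_pos
      · intro x hx
        simp only [List.mem_map, List.mem_append] at hx
        obtain ⟨e, hee, rfl⟩ := hx
        apply hpos
        rw [hsplit]
        rcases hee with hee | hee
        · simp [hee]
        · simp [hee]
      · rcases hl12 with h | h
        · rcases l1 with _ | ⟨a, l1'⟩
          · exact absurd rfl h
          · simp
        · rcases l2 with _ | ⟨a, l2'⟩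
          · exact absurd rfl h
          · rcases l1 with _ | ⟨a', l1'⟩ <;> simp
    linarith
  have hUavoid : ∀ a b : V, U.Adj a b → s(a, b) ≠ s(u, v) := by
    intro a b hab
    rw [hU, SimpleGraph.Subgraph.sup_adj] at hab
    rcases hab with hab | hab
    · rw [SimpleGraph.Subgraph.deleteEdges_adj] at hab
      intro hcon
      exact hab.2 (by simp [hcon])
    · intro hcon
      apply huvP
      rw [← hcon, ← Walk.mem_edges_toSubgraph, Subgraph.mem_edgeSet]
      exact hab
  have hPedgeU : ∀ e ∈ P.edges, e ∈ U.edgeSet := by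
    intro e hmem
    have : e ∈ P.toSubgraph.edgeSet := (P.mem_edges_toSubgraph).mpr hmem
    revert this
    refine Sym2.ind (fun a b hthis => ?_) e
    rw [Subgraph.mem_edgeSet] at hthis ⊢
    rw [hU]
    exact Or.inr hthis
  -- walks in U from r of bounded length to every tree vertex
  have claimT : ∀ (n : ℕ) (w : V) (hw : w ∈ T.verts),
      T.coe.dist rh ⟨w, hw⟩ ≤ n →
      ∃ q : U.coe.Walk ⟨r, hrU⟩ ⟨w, hTsubU hw⟩,
        q.length ≤ T.coe.dist rh ⟨w, hw⟩ := by
    intro n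
    induction n with
    | zero =>
      intro w hw hwn
      have h0 : T.coe.dist rh ⟨w, hw⟩ = 0 := Nat.le_zero.mp hwn
      have h1 : rh = ⟨w, hw⟩ := (hTconn.dist_eq_zero_iff).mp h0
      have hrw : r = w := congrArg Subtype.val h1
      subst hrw
      exact ⟨Walk.nil, by simp⟩
    | succ n ih =>
      intro w hw hwn
      by_cases hle : T.coe.dist rh ⟨w, hw⟩ ≤ n
      · exact ih w hw hle
      have hD : T.coe.dist rh ⟨w, hw⟩ = n + 1 := le_antisymm hwn (by omega)
      obtain ⟨p, hp⟩ := (hTconn.preconnected rh ⟨w, hw⟩).exists_walk_length_eq_dist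
      rw [hD] at hp
      have hne : (⟨w, hw⟩ : T.verts) ≠ rh := by
        intro hcon
        rw [hcon] at hD
        simp [SimpleGraph.dist_self] at hD
      obtain ⟨yh, hadj', p'', hrev⟩ := Walk.exists_eq_cons_of_ne hne p.reverse
      have hadj : T.coe.Adj yh ⟨w, hw⟩ := hadj'.symm
      set p' := p''.reverse with hp'def
      have hlen : p'.length + 1 = n + 1 := by
        have h2 := congrArg Walk.length hrev
        simp only [Walk.length_reverse, Walk.length_cons] at h2
        rw [hp'def, Walk.length_reverse]
        omega
      have hdy : T.coe.dist rh yh = n := by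
        have h1 : T.coe.dist rh yh ≤ n := by
          have := T.coe.dist_le p'
          omega
        have h2 : T.coe.dist rh ⟨w, hw⟩ ≤ T.coe.dist rh yh + 1 := by
          have h3 := hTconn.dist_triangle (u := rh) (v := yh) (w := ⟨w, hw⟩)
          have h4 : T.coe.dist yh ⟨w, hw⟩ ≤ 1 := by
            simpa using T.coe.dist_le hadj.toWalk
          omega
        omega
      obtain ⟨qy, hqy⟩ := ih (↑yh) yh.2 (le_of_eq hdy)
      have hqy' : qy.length ≤ n := le_trans hqy (le_of_eq hdy)
      by_cases hcase : s((yh : V), w) = s(u, v)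
      · rw [Sym2.eq_iff] at hcase
        rcases hcase with ⟨hyu, rfl⟩ | ⟨hyv, hwu⟩
        · -- w = v : take the path P instead
          obtain ⟨q, hq⟩ := STPRBHAux3.walk_to_coe U P hPedgeU hrU (hTsubU hw)
          refine ⟨q, ?_⟩
          have h5 : T.coe.dist rh ⟨w, hw⟩ = T.coe.dist rh uh + 1 := hdv
          rw [hq, h5]
          omega
        · -- w = u, y = v : contradicts hdv
          exfalso
          subst hwu
          have h6 : T.coe.dist rh vh = n := by
            rw [show vh = yh from Subtype.ext hyv.symm]
            exact hdy
          have h5 : T.coe.dist rh uh = n + 1 := hD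
          omega
      · -- normal step
        have hyT : T.Adj (↑yh) w := hadj
        have hUadj : U.Adj (↑yh) w := by
          rw [hU]
          left
          rw [SimpleGraph.Subgraph.deleteEdges_adj]
          exact ⟨hyT, by simpa using hcase⟩
        refine ⟨qy.concat (by exact hUadj :
          U.coe.Adj ⟨(yh : V), hTsubU yh.2⟩ ⟨w, hTsubU hw⟩), ?_⟩
        refine le_trans (le_of_eq (Walk.length_concat _ _)) ?_
        omega
  have hUverts : U.verts = T.verts ∪ {x | x ∈ P.support} := by
    rw [hU]
    simp [Subgraph.deleteEdges_verts, Walk.verts_toSubgraph]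
  have mainWalk : ∀ (w : V) (hw : w ∈ U.verts),
      ∃ q : U.coe.Walk ⟨r, hrU⟩ ⟨w, hw⟩, q.length ≤ H := by
    intro w hw
    have hw' := hw
    rw [hUverts] at hw'
    rcases hw' with h1 | h2
    · obtain ⟨q, hq⟩ := claimT (T.coe.dist rh ⟨w, h1⟩) w h1 le_rfl
      exact ⟨q, hq.trans (hH hr ⟨w, h1⟩)⟩
    · have h2' : w ∈ P.support := h2
      obtain ⟨q, hq⟩ := STPRBHAux3.walk_to_coe U (P.takeUntil w h2')
        (fun e hmem => hPedgeU e (P.edges_takeUntil_subset h2' hmem)) hrU hw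
      refine ⟨q, ?_⟩
      rw [hq]
      exact (P.length_takeUntil_le h2').trans hPH
  -- U.coe is connected
  have hUconn : U.coe.Connected := by
    haveI : Nonempty U.verts := ⟨⟨r, hrU⟩⟩
    have hreach : ∀ a : U.verts, U.coe.Reachable ⟨r, hrU⟩ a := by
      rintro ⟨wa, hwa⟩
      exact ⟨(mainWalk wa hwa).choose⟩
    exact Connected.mk (fun a b => (hreach a).symm.trans (hreach b))
  -- the distance bound in U.coe
  have hUdistH : ∀ a : U.verts, U.coe.dist ⟨r, hrU⟩ a ≤ H := by
    rintro ⟨wa, hwa⟩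
    obtain ⟨q, hq⟩ := mainWalk wa hwa
    exact (U.coe.dist_le q).trans hq
  -- extract a distance-preserving spanning tree of U.coe
  obtain ⟨T₂, hT₂le, hT₂tree, hT₂dist⟩ :=
    STPRBHAux2.exists_dist_tree U.coe ⟨r, hrU⟩ hUconn
  -- build the subgraph of G \ uv
  refine ⟨{ verts := U.verts
            Adj := fun a b => ∃ (ha : a ∈ U.verts) (hb : b ∈ U.verts),
              T₂.Adj ⟨a, ha⟩ ⟨b, hb⟩
            adj_sub := ?_
            edge_vert := ?_
            symm := ?_ }, ?_, ?_⟩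
  · rintro a b ⟨ha, hb, hab⟩
    have hUadj : U.Adj a b := hT₂le hab
    rw [SimpleGraph.deleteEdges_adj]
    exact ⟨U.adj_sub hUadj, by simpa using hUavoid a b hUadj⟩
  · rintro a b ⟨ha, hb, hab⟩
    exact ha
  · constructor
    rintro a b ⟨ha, hb, hab⟩
    exact ⟨hb, ha, hab.symm⟩
  · -- feasibility
    set T' : (G.deleteEdges {s(u, v)}).Subgraph :=
      { verts := U.verts
        Adj := fun a b => ∃ (ha : a ∈ U.verts) (hb : b ∈ U.verts),
          T₂.Adj ⟨a, ha⟩ ⟨b, hb⟩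
        adj_sub := by
          rintro a b ⟨ha, hb, hab⟩
          have hUadj : U.Adj a b := hT₂le hab
          rw [SimpleGraph.deleteEdges_adj]
          exact ⟨U.adj_sub hUadj, by simpa using hUavoid a b hUadj⟩
        edge_vert := by
          rintro a b ⟨ha, hb, hab⟩
          exact ha
        symm := by
          constructor
          rintro a b ⟨ha, hb, hab⟩
          exact ⟨hb, ha, hab.symm⟩ } with hT'def
    have hcoe : T'.coe = T₂ := by
      apply SimpleGraph.ext
      funext a b
      apply propext
      constructor
      · rintro ⟨ha, hb, h⟩
        exact h
      · intro h
        exact ⟨a.2, b.2, h⟩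
    refine ⟨by rw [hcoe]; exact hT₂tree, hrU, ?_, ?_⟩
    · intro hr' w
      rw [hcoe]
      exact le_trans (hT₂dist w) (hUdistH w)
    · -- cost bound
      set F₀ := T.edgeSet.toFinite.toFinset with hF₀
      have hsub : T'.edgeSet.toFinite.toFinset ⊆
          (F₀.erase s(u, v)) ∪ P.edges.toFinset := by
        intro e he'
        rw [Set.Finite.mem_toFinset] at he'
        revert he'
        refine Sym2.ind (fun a b he' => ?_) e
        rw [Subgraph.mem_edgeSet] at he'
        obtain ⟨ha, hb, hab⟩ := he'
        have hUadj : U.Adj a b := hT₂le hab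
        have hne : s(a, b) ≠ s(u, v) := hUavoid a b hUadj
        rw [hU, SimpleGraph.Subgraph.sup_adj] at hUadj
        rcases hUadj with h | h
        · rw [SimpleGraph.Subgraph.deleteEdges_adj] at h
          apply Finset.mem_union_left
          refine Finset.mem_erase.mpr ⟨hne, ?_⟩
          rw [hF₀, Set.Finite.mem_toFinset]
          exact Subgraph.mem_edgeSet.mpr h.1
        · apply Finset.mem_union_right
          rw [List.mem_toFinset]
          exact (P.mem_edges_toSubgraph).mp (Subgraph.mem_edgeSet.mpr h)
      have hGe : ∀ e ∈ (F₀.erase s(u, v)) ∪ P.edges.toFinset, e ∈ G.edgeSet := by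
        intro e hee
        rcases Finset.mem_union.mp hee with h | h
        · exact T.edgeSet_subset
            ((Set.Finite.mem_toFinset _).mp (Finset.mem_of_mem_erase h))
        · exact P.edges_subset_edgeSet (List.mem_toFinset.mp h)
      have h1 : ∑ e ∈ T'.edgeSet.toFinite.toFinset, c e ≤
          ∑ e ∈ (F₀.erase s(u, v)) ∪ P.edges.toFinset, c e :=
        Finset.sum_le_sum_of_subset_of_nonneg hsub
          (fun e hee _ => (hc e (hGe e hee)).le)
      have h2 : ∑ e ∈ (F₀.erase s(u, v)) ∪ P.edges.toFinset, c e ≤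
          ∑ e ∈ F₀.erase s(u, v), c e + ∑ e ∈ P.edges.toFinset, c e := by
        have h3 := Finset.sum_union_inter (s₁ := F₀.erase s(u, v))
          (s₂ := P.edges.toFinset) (f := c)
        have h4 : 0 ≤ ∑ e ∈ (F₀.erase s(u, v)) ∩ P.edges.toFinset, c e :=
          Finset.sum_nonneg (fun e hee => (hc e (hGe e (Finset.mem_union_left _
            (Finset.mem_of_mem_inter_left hee)))).le)
        linarith
      have h5 : ∑ e ∈ F₀.erase s(u, v), c e + c s(u, v) = ∑ e ∈ F₀, c e :=
        Finset.sum_erase_add _ _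
          (by rw [hF₀, Set.Finite.mem_toFinset]; exact Subgraph.mem_edgeSet.mpr he)
      have h6 : ∑ e ∈ P.edges.toFinset, c e = (P.edges.map c).sum :=
        List.sum_toFinset _ hP.isTrail.edges_nodup
      linarith
  · -- revenue
    rw [STPRBHRevenue, STPRBHRevenue]
    apply Finset.sum_le_sum_of_subset_of_nonneg
    · intro x hx
      rw [Set.Finite.mem_toFinset] at hx ⊢
      exact hTsubU hx
    · intro x _ _
      exact hρ x

end STPRBHAux4

/-- full EURC correctness: If the edge `uv` (with `u,v ≠ r`)
admits alternate paths `P_{r,u}` and `P_{r,v}` with cost at most `c uv` and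
with hop lengths at most `len(r,v)+1` and `len(r,u)+1` respectively, then for
every feasible STPRBH solution in `G` there is a feasible solution in
`G \ uv` with at least the same revenue; in particular the optimal values of
STPRBH on `G` and on `G \ uv` coincide. -/
theorem stmt_11 {V : Type*} [Fintype V] (G : SimpleGraph V)
    (c : Sym2 V → ℝ) (hc : ∀ e ∈ G.edgeSet, 0 < c e)
    (ρ : V → ℝ) (hρ : ∀ v, 0 ≤ ρ v) (r : V) (B : ℝ) (H : ℕ)
    (u v : V) (hur : u ≠ r) (hvr : v ≠ r) (huv : G.Adj u v)
    (Pru : G.Walk r u) (hPru : Pru.IsPath)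
    (Prv : G.Walk r v) (hPrv : Prv.IsPath)
    (hcPrv : (Prv.edges.map c).sum ≤ c s(u, v))
    (hlPrv : Prv.length ≤ G.dist r u + 1)
    (hcPru : (Pru.edges.map c).sum ≤ c s(u, v))
    (hlPru : Pru.length ≤ G.dist r v + 1) :
    (∀ T : G.Subgraph, STPRBHFeasible G c r B H T →
      ∃ T' : (G.deleteEdges {s(u, v)}).Subgraph,
        STPRBHFeasible (G.deleteEdges {s(u, v)}) c r B H T' ∧
        STPRBHRevenue ρ T ≤ STPRBHRevenue ρ T') ∧
    sSup {x : ℝ | ∃ T' : (G.deleteEdges {s(u, v)}).Subgraph,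
        STPRBHFeasible (G.deleteEdges {s(u, v)}) c r B H T' ∧
        STPRBHRevenue ρ T' = x} =
      sSup {x : ℝ | ∃ T : G.Subgraph,
        STPRBHFeasible G c r B H T ∧ STPRBHRevenue ρ T = x} := by
  classical
  have hmain : ∀ T : G.Subgraph, STPRBHFeasible G c r B H T →
      ∃ T' : (G.deleteEdges {s(u, v)}).Subgraph,
        STPRBHFeasible (G.deleteEdges {s(u, v)}) c r B H T' ∧
        STPRBHRevenue ρ T ≤ STPRBHRevenue ρ T' := by
    intro T hT
    by_cases hTedge : T.Adj u v
    · rcases le_total (T.coe.dist ⟨r, hT.2.1⟩ ⟨u, T.edge_vert hTedge⟩)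
        (T.coe.dist ⟨r, hT.2.1⟩ ⟨v, T.edge_vert hTedge.symm⟩) with hle | hle
      · exact STPRBHAux4.key G c hc ρ hρ r B H u v hur hvr huv Prv hPrv hcPrv
          hlPrv T hT hTedge hle
      · rw [show s(u, v) = s(v, u) from Sym2.eq_swap]
        exact STPRBHAux4.key G c hc ρ hρ r B H v u hvr hur huv.symm Pru hPru
          (by rw [Sym2.eq_swap]; exact hcPru) hlPru
          T hT (hTedge.symm) hle
    · refine ⟨liftSub T ?_, hT, le_refl _⟩
      intro a b hab
      rw [SimpleGraph.deleteEdges_adj]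
      refine ⟨T.adj_sub hab, ?_⟩
      simp only [Set.mem_singleton_iff]
      intro hcon
      rw [Sym2.eq_iff] at hcon
      rcases hcon with ⟨rfl, rfl⟩ | ⟨rfl, rfl⟩
      · exact hTedge hab
      · exact hTedge (hab.symm)
  refine ⟨hmain, ?_⟩
  have bwd : ∀ T' : (G.deleteEdges {s(u, v)}).Subgraph,
      STPRBHFeasible (G.deleteEdges {s(u, v)}) c r B H T' →
      ∃ T : G.Subgraph, STPRBHFeasible G c r B H T ∧
        STPRBHRevenue ρ T' = STPRBHRevenue ρ T :=
    fun T' hT' => ⟨liftSub T' (fun a b hab =>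
      ((SimpleGraph.deleteEdges_adj).mp (T'.adj_sub hab)).1), hT', rfl⟩
  set A := {x : ℝ | ∃ T' : (G.deleteEdges {s(u, v)}).Subgraph,
      STPRBHFeasible (G.deleteEdges {s(u, v)}) c r B H T' ∧
      STPRBHRevenue ρ T' = x} with hA
  set Bs := {x : ℝ | ∃ T : G.Subgraph,
      STPRBHFeasible G c r B H T ∧ STPRBHRevenue ρ T = x} with hBs
  have hbound : ∀ (G' : SimpleGraph V) (T : G'.Subgraph),
      STPRBHRevenue ρ T ≤ ∑ w, ρ w := by
    intro G' T
    rw [STPRBHRevenue]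
    exact Finset.sum_le_sum_of_subset_of_nonneg (Finset.subset_univ _)
      (fun x _ _ => hρ x)
  have hbddA : BddAbove A := by
    refine ⟨∑ w, ρ w, ?_⟩
    rintro x ⟨T', hT', rfl⟩
    exact hbound _ T'
  have hbddB : BddAbove Bs := by
    refine ⟨∑ w, ρ w, ?_⟩
    rintro x ⟨T, hT, rfl⟩
    exact hbound _ T
  by_cases hBne : Bs.Nonempty
  · have hAne : A.Nonempty := by
      obtain ⟨x, T, hT, rfl⟩ := hBne
      obtain ⟨T', hT', _⟩ := hmain T hT
      exact ⟨STPRBHRevenue ρ T', T', hT', rfl⟩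
    apply le_antisymm
    · apply csSup_le hAne
      rintro x ⟨T', hT', rfl⟩
      obtain ⟨T, hT, heq⟩ := bwd T' hT'
      rw [heq]
      exact le_csSup hbddB ⟨T, hT, rfl⟩
    · apply csSup_le hBne
      rintro x ⟨T, hT, rfl⟩
      obtain ⟨T', hT', hge⟩ := hmain T hT
      exact hge.trans (le_csSup hbddA ⟨T', hT', rfl⟩)
  · rw [Set.not_nonempty_iff_eq_empty] at hBne
    have hAe : A = ∅ := by
      rw [Set.eq_empty_iff_forall_notMem]
      rintro x ⟨T', hT', rfl⟩
      obtain ⟨T, hT, -⟩ := bwd T' hT'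
      rw [Set.eq_empty_iff_forall_notMem] at hBne
      exact hBne (STPRBHRevenue ρ T) ⟨T, hT, rfl⟩
    rw [hAe, hBne]
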